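/- arXiv:2202.10317 — 2 statements merged into one kernel-verified Lean document; each statement's English description precedes it below -/
import Mathlib

section
/- For every t > 0, every x < 0, and every bounded continuous f : ℝ → ℝ: √(2/(π t)) ∫_0^∞ e^{−s²/(2t)} C*(s)f(x) ds = ∫_{−∞}^∞ γ⁻(t,x,y) f(y) dy, where γ⁻(t,x,y) = (1/√(2πt))·(e^{−(y−x)²/(2t)} + ((q−p)/(p+q))·e^{−(y+x)²/(2t)}) for y < 0 and γ⁻(t,x,y) = (1/√(2πt))·(2p/(p+q))·e^{−(y−x)²/(2t)} for y > 0. -/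
open MeasureTheory Real Filter

/-- The dual cosine family `C*(t)` (extended to all real `t` by `C*(t) = C*(-t)`). -/
noncomputable def Cstar (p q t : ℝ) (f : ℝ → ℝ) : ℝ → ℝ := fun x =>
  if |t| ≤ |x| then (f (x + |t|) + f (x - |t|)) / 2
  else if x ≤ 0 then
    (f (x + |t|) + f (x - |t|)) / 2 + (q - p) / (2 * (p + q)) * (f (-x - |t|) - f (x + |t|))
  else
    (f (x + |t|) + f (x - |t|)) / 2 + (p - q) / (2 * (p + q)) * (f (|t| - x) - f (x - |t|))

/-- Transition density `γ⁺(t,x,y)` for a starting point `x > 0`. -/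
noncomputable def gammaPlus (p q t x y : ℝ) : ℝ :=
  if 0 < y then
    (1 / Real.sqrt (2 * Real.pi * t)) *
      (Real.exp (-(y - x)^2 / (2 * t)) + ((p - q) / (p + q)) * Real.exp (-(y + x)^2 / (2 * t)))
  else
    (1 / Real.sqrt (2 * Real.pi * t)) * (2 * q / (p + q)) * Real.exp (-(y - x)^2 / (2 * t))

/-- Transition density `γ⁻(t,x,y)` for a starting point `x < 0`. -/
noncomputable def gammaMinus (p q t x y : ℝ) : ℝ :=
  if y < 0 then
    (1 / Real.sqrt (2 * Real.pi * t)) *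
      (Real.exp (-(y - x)^2 / (2 * t)) + ((q - p) / (p + q)) * Real.exp (-(y + x)^2 / (2 * t)))
  else
    (1 / Real.sqrt (2 * Real.pi * t)) * (2 * p / (p + q)) * Real.exp (-(y - x)^2 / (2 * t))

/-- Auxiliary Gaussian-weighted function. -/
noncomputable def Gw (t c : ℝ) (f : ℝ → ℝ) : ℝ → ℝ := fun y =>
  Real.exp (-(y - c)^2 / (2 * t)) * f y

lemma Gw_integrable {t : ℝ} (ht : 0 < t) {f : ℝ → ℝ} (hf : Continuous f) {M : ℝ}
    (hM : ∀ y, |f y| ≤ M) (c : ℝ) : Integrable (Gw t c f) := by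
  have hg : Integrable (fun s : ℝ => Real.exp (-(1 / (2 * t)) * s ^ 2)) :=
    integrable_exp_neg_mul_sq (by positivity)
  have hg2 : Integrable (fun y : ℝ => Real.exp (-(1 / (2 * t)) * (y - c) ^ 2)) :=
    hg.comp_sub_right c
  have h := hg2.bdd_mul (c := M) hf.aestronglyMeasurable
    (Filter.Eventually.of_forall fun y => by simpa [Real.norm_eq_abs] using hM y)
  refine h.congr (Filter.Eventually.of_forall fun y => ?_)
  have harg : -(1 / (2 * t)) * (y - c) ^ 2 = -(y - c) ^ 2 / (2 * t) := by ring
  simp only [Gw]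
  rw [mul_comm, harg]

lemma setInt_add_right (F : ℝ → ℝ) (a c : ℝ) :
    ∫ s in Set.Ioi a, F (s + c) = ∫ y in Set.Ioi (a + c), F y := by
  have h1 : MeasurePreserving (fun x : ℝ => x + c) volume volume :=
    measurePreserving_add_right volume c
  have h2 : MeasurableEmbedding (fun x : ℝ => x + c) :=
    (Homeomorph.addRight c).isClosedEmbedding.measurableEmbedding
  have h := h1.setIntegral_preimage_emb h2 F (Set.Ioi (a + c))
  rw [← h, Set.preimage_add_const_Ioi, add_sub_cancel_right]

lemma setInt_sub_left (F : ℝ → ℝ) (a c : ℝ) :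
    ∫ s in Set.Ioi a, F (c - s) = ∫ y in Set.Iic (c - a), F y := by
  have step1 : ∫ s in Set.Ioi a, F (c - s) = ∫ s in Set.Ioi a, (fun u => F (-u)) (s + (-c)) := by
    refine setIntegral_congr_fun measurableSet_Ioi fun s _ => ?_
    congr 1
    ring
  rw [step1, setInt_add_right (fun u => F (-u)) a (-c), integral_comp_neg_Ioi]
  congr 1
  ring

lemma Gsubst_add (t cx a : ℝ) (f : ℝ → ℝ) :
    ∫ s in Set.Ioi a, Real.exp (-s^2 / (2 * t)) * f (cx + s)
      = ∫ y in Set.Ioi (a + cx), Gw t cx f y := by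
  rw [← setInt_add_right (Gw t cx f) a cx]
  refine setIntegral_congr_fun measurableSet_Ioi fun s _ => ?_
  simp only [Gw]
  rw [show s + cx - cx = s from by ring, show s + cx = cx + s from by ring]

lemma Gsubst_sub (t cx a : ℝ) (f : ℝ → ℝ) :
    ∫ s in Set.Ioi a, Real.exp (-s^2 / (2 * t)) * f (cx - s)
      = ∫ y in Set.Iic (cx - a), Gw t cx f y := by
  rw [← setInt_sub_left (Gw t cx f) a cx]
  refine setIntegral_congr_fun measurableSet_Ioi fun s _ => ?_
  simp only [Gw]
  rw [show cx - s - cx = -s from by ring, show (-s : ℝ)^2 = s^2 from by ring]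

theorem stmt16 (p q : ℝ) (hp : 0 ≤ p) (hq : 0 ≤ q) (hpq : 0 < p + q)
    (t x : ℝ) (ht : 0 < t) (hx : x < 0)
    (f : ℝ → ℝ) (hf : Continuous f) (hb : ∃ M, ∀ y, |f y| ≤ M) :
    Real.sqrt (2 / (Real.pi * t)) *
        ∫ s in Set.Ioi (0:ℝ), Real.exp (-s^2 / (2 * t)) * Cstar p q s f x
      = ∫ y : ℝ, gammaMinus p q t x y * f y := by
  obtain ⟨M, hM⟩ := hb
  have hπ := Real.pi_pos
  have hx' : (0:ℝ) < -x := by linarith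
  have hpq' : p + q ≠ 0 := ne_of_gt hpq
  -- notation
  set c0 : ℝ := (q - p) / (2 * (p + q)) with hc0
  -- integrability in y-space
  have hG1 : Integrable (Gw t x f) := Gw_integrable ht hf hM x
  have hG2 : Integrable (Gw t (-x) f) := Gw_integrable ht hf hM (-x)
  -- integrability of s-space integrands
  have sInt : ∀ (φ : ℝ → ℝ) (M' : ℝ), Continuous φ → (∀ y, |φ y| ≤ M') →
      Integrable (fun s => Real.exp (-s^2 / (2 * t)) * φ s) := by
    intro φ M' hφ hM'
    have h := Gw_integrable ht hφ hM' 0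
    refine h.congr (Filter.Eventually.of_forall fun y => ?_)
    simp [Gw]
  have hA3 : Integrable (fun s => Real.exp (-s^2 / (2 * t)) * f (x + s)) :=
    sInt _ M (hf.comp (continuous_const.add continuous_id)) (fun y => hM _)
  have hA4 : Integrable (fun s => Real.exp (-s^2 / (2 * t)) * f (x - s)) :=
    sInt _ M (hf.comp (continuous_const.sub continuous_id)) (fun y => hM _)
  have hA5 : Integrable (fun s => Real.exp (-s^2 / (2 * t)) * f (-x - s)) :=
    sInt _ M (hf.comp (continuous_const.sub continuous_id)) (fun y => hM _)
  have hInner : Integrable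
      (fun s => Real.exp (-s^2 / (2 * t)) * (c0 * (f (-x - s) - f (x + s)))) := by
    have heq : (fun s => Real.exp (-s^2 / (2 * t)) * (c0 * (f (-x - s) - f (x + s))))
        = fun s => c0 * (Real.exp (-s^2 / (2 * t)) * f (-x - s))
            - c0 * (Real.exp (-s^2 / (2 * t)) * f (x + s)) := by
      funext s; ring
    rw [heq]
    exact (hA5.const_mul c0).sub (hA3.const_mul c0)
  -- Step 1: rewrite the integrand on `Ioi 0`
  have key1 : Set.EqOn (fun s => Real.exp (-s^2 / (2 * t)) * Cstar p q s f x)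
      (fun s => (1/2) * (Real.exp (-s^2 / (2 * t)) * f (x + s))
          + (1/2) * (Real.exp (-s^2 / (2 * t)) * f (x - s))
          + Set.indicator (Set.Ioi (-x))
              (fun s => Real.exp (-s^2 / (2 * t)) * (c0 * (f (-x - s) - f (x + s)))) s)
      (Set.Ioi 0) := by
    intro s hs
    have hs0 : (0:ℝ) < s := hs
    simp only [Cstar, abs_of_pos hs0, abs_of_neg hx, Set.indicator_apply, Set.mem_Ioi]
    by_cases h : s ≤ -x
    · rw [if_pos h, if_neg (not_lt.mpr h)]
      ring
    · rw [if_neg h, if_pos hx.le, if_pos (lt_of_not_ge h)]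
      ring
  rw [setIntegral_congr_fun measurableSet_Ioi key1]
  have hI3 : IntegrableOn (fun s : ℝ => 1/2 * (Real.exp (-s^2 / (2 * t)) * f (x + s)))
      (Set.Ioi 0) := (hA3.const_mul _).integrableOn
  have hI4 : IntegrableOn (fun s : ℝ => 1/2 * (Real.exp (-s^2 / (2 * t)) * f (x - s)))
      (Set.Ioi 0) := (hA4.const_mul _).integrableOn
  have hI12 : IntegrableOn (fun s : ℝ => 1/2 * (Real.exp (-s^2 / (2 * t)) * f (x + s))
      + 1/2 * (Real.exp (-s^2 / (2 * t)) * f (x - s))) (Set.Ioi 0) := hI3.add hI4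
  have hIind : IntegrableOn (fun s : ℝ => Set.indicator (Set.Ioi (-x))
      (fun s => Real.exp (-s^2 / (2 * t)) * (c0 * (f (-x - s) - f (x + s)))) s)
      (Set.Ioi 0) := (hInner.indicator measurableSet_Ioi).integrableOn
  rw [integral_add hI12 hIind]
  rw [integral_add hI3 hI4]
  rw [integral_const_mul, integral_const_mul]
  rw [setIntegral_indicator measurableSet_Ioi, Set.Ioi_inter_Ioi,
    sup_eq_right.mpr hx'.le]
  have hinner_eq : Set.EqOn
      (fun s => Real.exp (-s^2 / (2 * t)) * (c0 * (f (-x - s) - f (x + s))))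
      (fun s => c0 * (Real.exp (-s^2 / (2 * t)) * f (-x - s))
          - c0 * (Real.exp (-s^2 / (2 * t)) * f (x + s))) (Set.Ioi (-x)) := by
    intro s _; ring
  rw [setIntegral_congr_fun measurableSet_Ioi hinner_eq]
  have hI5 : IntegrableOn (fun s : ℝ => c0 * (Real.exp (-s^2 / (2 * t)) * f (-x - s)))
      (Set.Ioi (-x)) := (hA5.const_mul c0).integrableOn
  have hI6 : IntegrableOn (fun s : ℝ => c0 * (Real.exp (-s^2 / (2 * t)) * f (x + s)))
      (Set.Ioi (-x)) := (hA3.const_mul c0).integrableOn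
  rw [integral_sub hI5 hI6]
  rw [integral_const_mul, integral_const_mul]
  -- Step 2: substitutions
  have E1 := Gsubst_add t x 0 f
  rw [zero_add] at E1
  have E2 := Gsubst_sub t x 0 f
  rw [sub_zero] at E2
  have E3 : ∫ s in Set.Ioi (-x), Real.exp (-s^2 / (2 * t)) * f (-x - s)
      = ∫ y in Set.Iic (0:ℝ), Gw t (-x) f y := by
    have h := Gsubst_sub t (-x) (-x) f
    rwa [sub_neg_eq_add, neg_add_cancel] at h
  rw [integral_Iic_eq_integral_Iio] at E3
  have E4 : ∫ s in Set.Ioi (-x), Real.exp (-s^2 / (2 * t)) * f (x + s)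
      = ∫ y in Set.Ioi (0:ℝ), Gw t x f y := by
    have h := Gsubst_add t x (-x) f
    rwa [neg_add_cancel] at h
  rw [E1, E2, E3, E4]
  -- abbreviations for the remaining integrals
  have split_a : (∫ y in Set.Ioi x, Gw t x f y) = (∫ y in Set.Iio 0, Gw t x f y)
      + (∫ y in Set.Ioi 0, Gw t x f y) - ∫ y in Set.Iic x, Gw t x f y := by
    have h1 : (∫ y in Set.Iic x, Gw t x f y) + (∫ y in Set.Ioi x, Gw t x f y)
        = ∫ y, Gw t x f y := intervalIntegral.integral_Iic_add_Ioi hG1.integrableOn hG1.integrableOn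
    have h2 : (∫ y in Set.Iio 0, Gw t x f y) + (∫ y in Set.Ici 0, Gw t x f y)
        = ∫ y, Gw t x f y := intervalIntegral.integral_Iio_add_Ici hG1.integrableOn hG1.integrableOn
    rw [integral_Ici_eq_integral_Ioi] at h2
    linarith
  rw [split_a]
  -- Step 3: compute the right-hand side
  have hgam1 : Set.EqOn
      (fun y => (1 / Real.sqrt (2 * Real.pi * t)) * Gw t x f y
          + ((q - p) / (p + q)) * ((1 / Real.sqrt (2 * Real.pi * t)) * Gw t (-x) f y))
      (fun y => gammaMinus p q t x y * f y) (Set.Iio 0) := by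
    intro y hy
    have hy' : y < 0 := hy
    simp only [gammaMinus, if_pos hy', Gw]
    rw [show y - -x = y + x from by ring]
    ring
  have hgam2 : Set.EqOn
      (fun y => (1 / Real.sqrt (2 * Real.pi * t)) * (2 * p / (p + q)) * Gw t x f y)
      (fun y => gammaMinus p q t x y * f y) (Set.Ici 0) := by
    intro y hy
    have hy' : ¬ y < 0 := not_lt.mpr hy
    simp only [gammaMinus, if_neg hy', Gw]
    ring
  have hIio : IntegrableOn (fun y => gammaMinus p q t x y * f y) (Set.Iio 0) := by
    refine IntegrableOn.congr_fun ?_ hgam1 measurableSet_Iio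
    exact ((hG1.const_mul _).add ((hG2.const_mul _).const_mul _)).integrableOn
  have hIci : IntegrableOn (fun y => gammaMinus p q t x y * f y) (Set.Ici 0) := by
    refine IntegrableOn.congr_fun ?_ hgam2 measurableSet_Ici
    exact (hG1.const_mul _).integrableOn
  rw [← intervalIntegral.integral_Iio_add_Ici hIio hIci]
  rw [← setIntegral_congr_fun measurableSet_Iio hgam1,
    ← setIntegral_congr_fun measurableSet_Ici hgam2]
  have hJ1 : IntegrableOn (fun y : ℝ => (1 / Real.sqrt (2 * Real.pi * t)) * Gw t x f y)
      (Set.Iio 0) := (hG1.const_mul _).integrableOn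
  have hJ2 : IntegrableOn (fun y : ℝ => ((q - p) / (p + q)) *
      ((1 / Real.sqrt (2 * Real.pi * t)) * Gw t (-x) f y)) (Set.Iio 0) :=
    ((hG2.const_mul _).const_mul _).integrableOn
  rw [integral_add hJ1 hJ2]
  rw [integral_const_mul, integral_const_mul, integral_const_mul, integral_const_mul,
    integral_Ici_eq_integral_Ioi]
  -- Step 4: finish with algebra
  have hsqrt_pos : (0:ℝ) < Real.sqrt (2 * Real.pi * t) := Real.sqrt_pos.mpr (by positivity)
  have hsqrt : Real.sqrt (2 / (Real.pi * t)) = 2 / Real.sqrt (2 * Real.pi * t) := by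
    rw [show 2 / (Real.pi * t) = (2 / Real.sqrt (2 * Real.pi * t))^2 from ?_]
    · exact Real.sqrt_sq (by positivity)
    · rw [div_pow, Real.sq_sqrt (by positivity)]
      ring
  rw [hsqrt, hc0]
  field_simp
  ring
end

section
/- Let p, q ≥ 0 with p + q > 0, let t ≥ 0, let φ : ℝ → ℝ be Lebesgue integrable and let f : ℝ → ℝ be bounded and continuous. Then ∫_{−∞}^∞ (C_{p,q}(t)φ)(x)·f(x) dx = ∫_{−∞}^∞ φ(x)·(C*(t)f)(x) dx; that is, C*(t) is the adjoint of C_{p,q}(t). -/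
open MeasureTheory Real Filter

/-- The cosine family `C_{p,q}(t)` acting on integrable functions (for `t ≥ 0`). -/
noncomputable def Cpq (p q t : ℝ) (φ : ℝ → ℝ) : ℝ → ℝ := fun x =>
  if t < |x| then (φ (x + t) + φ (x - t)) / 2
  else if x < 0 then
    (φ (x + t) + φ (x - t)) / 2 + (q - p) / (2 * (p + q)) * (φ (-x - t) + φ (x + t))
  else
    (φ (x + t) + φ (x - t)) / 2 + (p - q) / (2 * (p + q)) * (φ (t - x) + φ (x - t))

private lemma integral_add6 {g1 g2 g3 g4 g5 g6 : ℝ → ℝ}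
    (h1 : Integrable g1 volume) (h2 : Integrable g2 volume) (h3 : Integrable g3 volume)
    (h4 : Integrable g4 volume) (h5 : Integrable g5 volume) (h6 : Integrable g6 volume) :
    (∫ x : ℝ, (g1 x + g2 x + g3 x + g4 x + g5 x + g6 x)) =
      (∫ x : ℝ, g1 x) + (∫ x : ℝ, g2 x) + (∫ x : ℝ, g3 x) + (∫ x : ℝ, g4 x)
        + (∫ x : ℝ, g5 x) + (∫ x : ℝ, g6 x) := by
  have h12 : Integrable (fun x => g1 x + g2 x) volume := h1.add h2
  have h13 : Integrable (fun x => g1 x + g2 x + g3 x) volume := h12.add h3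
  have h14 : Integrable (fun x => g1 x + g2 x + g3 x + g4 x) volume := h13.add h4
  have h15 : Integrable (fun x => g1 x + g2 x + g3 x + g4 x + g5 x) volume := h14.add h5
  rw [integral_add h15 h6, integral_add h14 h5, integral_add h13 h4, integral_add h12 h3,
    integral_add h1 h2]

theorem stmt19 (p q : ℝ) (hp : 0 ≤ p) (hq : 0 ≤ q) (hpq : 0 < p + q)
    (t : ℝ) (ht : 0 ≤ t)
    (φ : ℝ → ℝ) (hφ : MeasureTheory.Integrable φ)
    (f : ℝ → ℝ) (hf : Continuous f) (hb : ∃ M, ∀ y, |f y| ≤ M) :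
    ∫ x : ℝ, Cpq p q t φ x * f x = ∫ x : ℝ, φ x * Cstar p q t f x := by
  obtain ⟨M, hM⟩ := hb
  set c : ℝ := (q - p) / (2 * (p + q)) with hc
  have hnc : (p - q) / (2 * (p + q)) = -c := by rw [hc]; ring
  -- Integrability of all products appearing below
  have hI : ∀ (σ τ : ℝ → ℝ), MeasurePreserving σ volume volume → Continuous τ →
      Integrable (fun x => φ (σ x) * f (τ x)) volume := by
    intro σ τ hσ hτ
    have h1 : Integrable (fun x => φ (σ x)) volume :=
      (hσ.integrable_comp hφ.aestronglyMeasurable).mpr hφ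
    have h2 : Integrable (fun x => f (τ x) * φ (σ x)) volume :=
      h1.bdd_mul (hf.comp hτ).aestronglyMeasurable
        (c := M) (Filter.Eventually.of_forall fun x => by simpa [Real.norm_eq_abs] using hM (τ x))
    exact h2.congr (Filter.Eventually.of_forall fun x => mul_comm _ _)
  have mpadd : MeasurePreserving (fun x : ℝ => x + t) volume volume :=
    measurePreserving_add_right volume t
  have mpsub : MeasurePreserving (fun x : ℝ => x - t) volume volume :=
    measurePreserving_sub_right volume t
  have mpneg : MeasurePreserving (fun x : ℝ => -x - t) volume volume :=
    mpsub.comp (Measure.measurePreserving_neg volume)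
  have mpid : MeasurePreserving (fun x : ℝ => x) volume volume := MeasurePreserving.id volume
  have ctadd : Continuous (fun x : ℝ => x + t) := continuous_add_right t
  have ctsub : Continuous (fun x : ℝ => x - t) := continuous_sub_right t
  have ctneg : Continuous (fun x : ℝ => -x - t) := continuous_neg.sub continuous_const
  have ctrev : Continuous (fun x : ℝ => t - x) := continuous_const.sub continuous_id
  -- the six pieces of the left-hand side
  have iL1 : Integrable (fun x => (1/2 : ℝ) * (φ (x + t) * f x)) volume :=
    (hI _ _ mpadd continuous_id).const_mul _
  have iL2 : Integrable (fun x => (1/2 : ℝ) * (φ (x - t) * f x)) volume :=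
    (hI _ _ mpsub continuous_id).const_mul _
  have iL3 : Integrable
      (fun x => c * (Set.Ico (-t) 0).indicator (fun y => φ (-y - t) * f y) x) volume :=
    (((hI _ _ mpneg continuous_id).indicator measurableSet_Ico).const_mul _)
  have iL4 : Integrable
      (fun x => c * (Set.Ico (-t) 0).indicator (fun y => φ (y + t) * f y) x) volume :=
    (((hI _ _ mpadd continuous_id).indicator measurableSet_Ico).const_mul _)
  have iL5 : Integrable
      (fun x => (-c) * (Set.Icc 0 t).indicator (fun y => φ (t - y) * f y) x) volume := by
    have mprev : MeasurePreserving (fun x : ℝ => -x + t) volume volume :=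
      (measurePreserving_add_right volume t).comp (Measure.measurePreserving_neg volume)
    have h0 : Integrable (fun y => φ (t - y) * f y) volume :=
      (hI (fun x => -x + t) (fun x => x) mprev continuous_id).congr
        (Filter.Eventually.of_forall fun x => by simp only [neg_add_eq_sub])
    exact (h0.indicator measurableSet_Icc).const_mul _
  have iL6 : Integrable
      (fun x => (-c) * (Set.Icc 0 t).indicator (fun y => φ (y - t) * f y) x) volume :=
    (((hI _ _ mpsub continuous_id).indicator measurableSet_Icc).const_mul _)
  -- the six pieces of the right-hand side
  have iR1 : Integrable (fun x => (1/2 : ℝ) * (φ x * f (x + t))) volume :=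
    (hI _ _ mpid ctadd).const_mul _
  have iR2 : Integrable (fun x => (1/2 : ℝ) * (φ x * f (x - t))) volume :=
    (hI _ _ mpid ctsub).const_mul _
  have iR3 : Integrable
      (fun x => c * (Set.Ioc (-t) 0).indicator (fun y => φ y * f (-y - t)) x) volume :=
    (((hI _ _ mpid ctneg).indicator measurableSet_Ioc).const_mul _)
  have iR4 : Integrable
      (fun x => (-c) * (Set.Ioc (-t) 0).indicator (fun y => φ y * f (y + t)) x) volume :=
    (((hI _ _ mpid ctadd).indicator measurableSet_Ioc).const_mul _)
  have iR5 : Integrable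
      (fun x => (-c) * (Set.Ioo 0 t).indicator (fun y => φ y * f (t - y)) x) volume :=
    (((hI _ _ mpid ctrev).indicator measurableSet_Ioo).const_mul _)
  have iR6 : Integrable
      (fun x => c * (Set.Ioo 0 t).indicator (fun y => φ y * f (y - t)) x) volume :=
    (((hI _ _ mpid ctsub).indicator measurableSet_Ioo).const_mul _)
  -- pointwise decomposition of the left-hand side
  have hLpt : (fun x => Cpq p q t φ x * f x) = fun x =>
      (1/2 : ℝ) * (φ (x + t) * f x) + (1/2 : ℝ) * (φ (x - t) * f x)
      + c * (Set.Ico (-t) 0).indicator (fun y => φ (-y - t) * f y) x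
      + c * (Set.Ico (-t) 0).indicator (fun y => φ (y + t) * f y) x
      + (-c) * (Set.Icc 0 t).indicator (fun y => φ (t - y) * f y) x
      + (-c) * (Set.Icc 0 t).indicator (fun y => φ (y - t) * f y) x := by
    funext x
    simp only [Cpq]
    rcases le_or_gt 0 x with hx | hx
    · rw [abs_of_nonneg hx]
      split_ifs with h1 h2
      · have m1 : x ∉ Set.Ico (-t) 0 := by
          simp only [Set.mem_Ico, not_and, not_lt]; intro _; exact hx
        have m2 : x ∉ Set.Icc 0 t := by
          simp only [Set.mem_Icc, not_and, not_le]; intro _; exact h1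
        rw [Set.indicator_of_notMem m1, Set.indicator_of_notMem m1,
          Set.indicator_of_notMem m2, Set.indicator_of_notMem m2]
        ring
      · exact absurd h2 (not_lt.2 hx)
      · have m1 : x ∉ Set.Ico (-t) 0 := by
          simp only [Set.mem_Ico, not_and, not_lt]; intro _; exact hx
        have m2 : x ∈ Set.Icc 0 t := Set.mem_Icc.2 ⟨hx, by linarith [not_lt.1 h1]⟩
        rw [Set.indicator_of_notMem m1, Set.indicator_of_notMem m1,
          Set.indicator_of_mem m2, Set.indicator_of_mem m2, hnc]
        ring
    · rw [abs_of_neg hx]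
      split_ifs with h1
      · have m1 : x ∉ Set.Ico (-t) 0 := by
          simp only [Set.mem_Ico, not_and, not_lt]; intro h; linarith
        have m2 : x ∉ Set.Icc 0 t := by
          simp only [Set.mem_Icc, not_and, not_le]; intro h; linarith
        rw [Set.indicator_of_notMem m1, Set.indicator_of_notMem m1,
          Set.indicator_of_notMem m2, Set.indicator_of_notMem m2]
        ring
      · have m1 : x ∈ Set.Ico (-t) 0 := Set.mem_Ico.2 ⟨by linarith [not_lt.1 h1], hx⟩
        have m2 : x ∉ Set.Icc 0 t := by
          simp only [Set.mem_Icc, not_and, not_le]; intro h; linarith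
        rw [Set.indicator_of_mem m1, Set.indicator_of_mem m1,
          Set.indicator_of_notMem m2, Set.indicator_of_notMem m2]
        ring
  -- pointwise decomposition of the right-hand side
  have hRpt : (fun x => φ x * Cstar p q t f x) = fun x =>
      (1/2 : ℝ) * (φ x * f (x + t)) + (1/2 : ℝ) * (φ x * f (x - t))
      + c * (Set.Ioc (-t) 0).indicator (fun y => φ y * f (-y - t)) x
      + (-c) * (Set.Ioc (-t) 0).indicator (fun y => φ y * f (y + t)) x
      + (-c) * (Set.Ioo 0 t).indicator (fun y => φ y * f (t - y)) x
      + c * (Set.Ioo 0 t).indicator (fun y => φ y * f (y - t)) x := by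
    funext x
    simp only [Cstar, abs_of_nonneg ht]
    rcases le_or_gt 0 x with hx | hx
    · rw [abs_of_nonneg hx]
      split_ifs with h1 h2
      · have m1 : x ∉ Set.Ioc (-t) 0 := by
          simp only [Set.mem_Ioc, not_and, not_le]; intro h; linarith
        have m2 : x ∉ Set.Ioo 0 t := by
          simp only [Set.mem_Ioo, not_and, not_lt]; intro h; linarith
        rw [Set.indicator_of_notMem m1, Set.indicator_of_notMem m1,
          Set.indicator_of_notMem m2, Set.indicator_of_notMem m2]
        ring
      · have m1 : x ∈ Set.Ioc (-t) 0 := Set.mem_Ioc.2 ⟨by linarith [not_le.1 h1], h2⟩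
        have m2 : x ∉ Set.Ioo 0 t := by
          simp only [Set.mem_Ioo, not_and, not_lt]; intro h; linarith
        rw [Set.indicator_of_mem m1, Set.indicator_of_mem m1,
          Set.indicator_of_notMem m2, Set.indicator_of_notMem m2]
        ring
      · have m1 : x ∉ Set.Ioc (-t) 0 := by
          simp only [Set.mem_Ioc, not_and, not_le]; intro _; exact not_le.1 h2
        have m2 : x ∈ Set.Ioo 0 t := Set.mem_Ioo.2 ⟨not_le.1 h2, not_le.1 h1⟩
        rw [Set.indicator_of_notMem m1, Set.indicator_of_notMem m1,
          Set.indicator_of_mem m2, Set.indicator_of_mem m2, hnc]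
        ring
    · rw [abs_of_neg hx]
      split_ifs with h1 h2
      · have m1 : x ∉ Set.Ioc (-t) 0 := by
          simp only [Set.mem_Ioc, not_and, not_le]; intro h; linarith
        have m2 : x ∉ Set.Ioo 0 t := by
          simp only [Set.mem_Ioo, not_and, not_lt]; intro h; linarith
        rw [Set.indicator_of_notMem m1, Set.indicator_of_notMem m1,
          Set.indicator_of_notMem m2, Set.indicator_of_notMem m2]
        ring
      · have m1 : x ∈ Set.Ioc (-t) 0 := Set.mem_Ioc.2 ⟨by linarith [not_le.1 h1], h2⟩
        have m2 : x ∉ Set.Ioo 0 t := by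
          simp only [Set.mem_Ioo, not_and, not_lt]; intro h; linarith
        rw [Set.indicator_of_mem m1, Set.indicator_of_mem m1,
          Set.indicator_of_notMem m2, Set.indicator_of_notMem m2]
        ring
      · exact absurd (le_of_lt hx) h2
  -- substitution identities
  have S1 : (∫ x : ℝ, φ (x + t) * f x) = ∫ x : ℝ, φ x * f (x - t) := by
    rw [show (fun x : ℝ => φ (x + t) * f x) = fun x => (fun y => φ y * f (y - t)) (x + t) from
      funext fun x => by simp only [add_sub_cancel_right]]
    exact integral_add_right_eq_self (μ := volume) (fun y => φ y * f (y - t)) t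
  have S2 : (∫ x : ℝ, φ (x - t) * f x) = ∫ x : ℝ, φ x * f (x + t) := by
    rw [show (fun x : ℝ => φ (x - t) * f x) = fun x => (fun y => φ y * f (y + t)) (x - t) from
      funext fun x => by simp only [sub_add_cancel]]
    exact integral_sub_right_eq_self (μ := volume) (fun y => φ y * f (y + t)) t
  have S3 : (∫ x : ℝ, (Set.Ico (-t) 0).indicator (fun y => φ (-y - t) * f y) x)
      = ∫ x : ℝ, (Set.Ioc (-t) 0).indicator (fun y => φ y * f (-y - t)) x := by
    have stepB : (∫ x : ℝ, (Set.Ico (-t) 0).indicator (fun y => φ (-y - t) * f y) x)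
        = ∫ x : ℝ, (Set.Ioc 0 t).indicator (fun y => φ (y - t) * f (-y)) x := by
      rw [show (fun x : ℝ => (Set.Ico (-t) 0).indicator (fun y => φ (-y - t) * f y) x)
          = fun x => (Set.Ioc (0:ℝ) t).indicator (fun y => φ (y - t) * f (-y)) (-x) from
        funext fun x => by
          simp only [Set.indicator_apply, Set.mem_Ico, Set.mem_Ioc, neg_neg]
          exact if_congr ⟨fun ⟨a, b⟩ => ⟨by linarith, by linarith⟩,
            fun ⟨a, b⟩ => ⟨by linarith, by linarith⟩⟩ rfl rfl]
      exact integral_neg_eq_self ((Set.Ioc (0:ℝ) t).indicator fun y => φ (y - t) * f (-y)) volume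
    rw [stepB]
    rw [show (fun x : ℝ => (Set.Ioc (0:ℝ) t).indicator (fun y => φ (y - t) * f (-y)) x)
        = fun x => (Set.Ioc (-t) 0).indicator (fun y => φ y * f (-y - t)) (x - t) from
      funext fun x => by
        simp only [Set.indicator_apply, Set.mem_Ioc, Set.mem_Ioc]
        rw [show -(x - t) - t = -x from by ring]
        exact if_congr ⟨fun ⟨a, b⟩ => ⟨by linarith, by linarith⟩,
          fun ⟨a, b⟩ => ⟨by linarith, by linarith⟩⟩ rfl rfl]
    exact integral_sub_right_eq_self (μ := volume)
      ((Set.Ioc (-t) 0).indicator fun y => φ y * f (-y - t)) t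
  have S4 : (∫ x : ℝ, (Set.Ico (-t) 0).indicator (fun y => φ (y + t) * f y) x)
      = ∫ x : ℝ, (Set.Ico 0 t).indicator (fun y => φ y * f (y - t)) x := by
    rw [show (fun x : ℝ => (Set.Ico (-t) 0).indicator (fun y => φ (y + t) * f y) x)
        = fun x => (Set.Ico (0:ℝ) t).indicator (fun y => φ y * f (y - t)) (x + t) from
      funext fun x => by
        simp only [Set.indicator_apply, Set.mem_Ico, add_sub_cancel_right]
        exact if_congr ⟨fun ⟨a, b⟩ => ⟨by linarith, by linarith⟩,
          fun ⟨a, b⟩ => ⟨by linarith, by linarith⟩⟩ rfl rfl]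
    exact integral_add_right_eq_self (μ := volume)
      ((Set.Ico (0:ℝ) t).indicator fun y => φ y * f (y - t)) t
  have S5 : (∫ x : ℝ, (Set.Icc 0 t).indicator (fun y => φ (t - y) * f y) x)
      = ∫ x : ℝ, (Set.Icc 0 t).indicator (fun y => φ y * f (t - y)) x := by
    have step1 : (∫ x : ℝ, (Set.Icc (0:ℝ) t).indicator (fun y => φ y * f (t - y)) (-x))
        = ∫ x : ℝ, (Set.Icc (0:ℝ) t).indicator (fun y => φ y * f (t - y)) x :=
      integral_neg_eq_self ((Set.Icc (0:ℝ) t).indicator fun y => φ y * f (t - y)) volume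
    have step2 : (∫ x : ℝ, (Set.Icc (0:ℝ) t).indicator (fun y => φ y * f (t - y)) (-(x - t)))
        = ∫ x : ℝ, (Set.Icc (0:ℝ) t).indicator (fun y => φ y * f (t - y)) (-x) :=
      integral_sub_right_eq_self (μ := volume) (fun x => (Set.Icc (0:ℝ) t).indicator
        (fun y => φ y * f (t - y)) (-x)) t
    rw [show (fun x : ℝ => (Set.Icc (0:ℝ) t).indicator (fun y => φ (t - y) * f y) x)
        = fun x => (Set.Icc (0:ℝ) t).indicator (fun y => φ y * f (t - y)) (-(x - t)) from
      funext fun x => by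
        simp only [Set.indicator_apply, Set.mem_Icc]
        rw [show -(x - t) = t - x from by ring, show t - (t - x) = x from by ring]
        exact if_congr ⟨fun ⟨a, b⟩ => ⟨by linarith, by linarith⟩,
          fun ⟨a, b⟩ => ⟨by linarith, by linarith⟩⟩ rfl rfl]
    rw [step2, step1]
  have S6 : (∫ x : ℝ, (Set.Icc 0 t).indicator (fun y => φ (y - t) * f y) x)
      = ∫ x : ℝ, (Set.Icc (-t) 0).indicator (fun y => φ y * f (y + t)) x := by
    rw [show (fun x : ℝ => (Set.Icc (0:ℝ) t).indicator (fun y => φ (y - t) * f y) x)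
        = fun x => (Set.Icc (-t) 0).indicator (fun y => φ y * f (y + t)) (x - t) from
      funext fun x => by
        simp only [Set.indicator_apply, Set.mem_Icc, sub_add_cancel]
        exact if_congr ⟨fun ⟨a, b⟩ => ⟨by linarith, by linarith⟩,
          fun ⟨a, b⟩ => ⟨by linarith, by linarith⟩⟩ rfl rfl]
    exact integral_sub_right_eq_self (μ := volume)
      ((Set.Icc (-t) 0).indicator fun y => φ y * f (y + t)) t
  -- boundary (measure-zero) adjustments
  have A4 : (∫ x : ℝ, (Set.Ico (0:ℝ) t).indicator (fun y => φ y * f (y - t)) x)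
      = ∫ x : ℝ, (Set.Ioo (0:ℝ) t).indicator (fun y => φ y * f (y - t)) x :=
    integral_congr_ae (indicator_ae_eq_of_ae_eq_set Ioo_ae_eq_Ico.symm)
  have A5 : (∫ x : ℝ, (Set.Icc (0:ℝ) t).indicator (fun y => φ y * f (t - y)) x)
      = ∫ x : ℝ, (Set.Ioo (0:ℝ) t).indicator (fun y => φ y * f (t - y)) x :=
    integral_congr_ae (indicator_ae_eq_of_ae_eq_set Ioo_ae_eq_Icc.symm)
  have A6 : (∫ x : ℝ, (Set.Icc (-t) 0).indicator (fun y => φ y * f (y + t)) x)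
      = ∫ x : ℝ, (Set.Ioc (-t) 0).indicator (fun y => φ y * f (y + t)) x :=
    integral_congr_ae (indicator_ae_eq_of_ae_eq_set Ioc_ae_eq_Icc.symm)
  -- put everything together
  rw [hLpt, hRpt, integral_add6 iL1 iL2 iL3 iL4 iL5 iL6, integral_add6 iR1 iR2 iR3 iR4 iR5 iR6]
  simp only [integral_const_mul]
  rw [S1, S2, S3, S4, S5, S6, A4, A5, A6]
  ring
end
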